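/- Let g = 7x³ − 3x² + 21x − 5 ∈ ℚ[x]. For any two distinct roots α ≠ β of g in ℂ, the intersection of the subfields ℚ(α) and ℚ(β) of ℂ equals ℚ. Equivalently, the splitting field of g over ℚ has degree 6, so any two different roots of g generate different cubic extensions of ℚ. -/

import Mathlib

open Polynomial IntermediateField

namespace CubicFieldAux

noncomputable def g : ℚ[X] := 7 * X ^ 3 - 3 * X ^ 2 + 21 * X - 5

lemma g_natDegree : g.natDegree = 3 := by unfold g; compute_degree!

lemma g_ne_zero : g ≠ 0 := by
  intro h; have := g_natDegree; rw [h] at this; simp at this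

lemma aeval_g {R : Type*} [CommRing R] [Algebra ℚ R] (x : R) :
    aeval x g = 7 * x ^ 3 - 3 * x ^ 2 + 21 * x - 5 := by
  simp [g, map_ofNat]

lemma no_rat_root (q : ℚ) : 7 * q ^ 3 - 3 * q ^ 2 + 21 * q - 5 ≠ 0 := by
  intro h
  have hd0 : ((q.den : ℚ)) ≠ 0 := by positivity
  have hnum : (q.num : ℚ) = q * q.den := (div_eq_iff hd0).mp (Rat.num_div_den q)
  have key : (7 * q.num ^ 3 - 3 * q.num ^ 2 * q.den + 21 * q.num * q.den ^ 2
      - 5 * (q.den : ℤ) ^ 3 : ℤ) = 0 := by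
    have h2 : ((7 * q.num ^ 3 - 3 * q.num ^ 2 * q.den + 21 * q.num * q.den ^ 2
        - 5 * (q.den : ℤ) ^ 3 : ℤ) : ℚ) = (7 * q ^ 3 - 3 * q ^ 2 + 21 * q - 5) * q.den ^ 3 := by
      push_cast
      rw [hnum]; ring
    rw [h, zero_mul] at h2
    exact_mod_cast h2
  obtain ⟨n, hn⟩ : ∃ n : ℤ, q.num = n := ⟨_, rfl⟩
  obtain ⟨d, hd⟩ : ∃ d : ℤ, (q.den : ℤ) = d := ⟨_, rfl⟩
  rw [hn, hd] at key
  have hcop : IsCoprime n d := by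
    rw [← hn, ← hd, Int.isCoprime_iff_gcd_eq_one]; exact q.reduced
  have hd0' : 0 < d := by rw [← hd]; positivity
  have hddvd : d ∣ 7 := by
    have h1 : d ∣ 7 * n ^ 3 := ⟨3 * n ^ 2 - 21 * n * d + 5 * d ^ 2, by linarith [key]⟩
    exact (hcop.symm.pow_right (n := 3)).dvd_of_dvd_mul_right h1
  have hndvd : n ∣ 5 := by
    have h1 : n ∣ 5 * d ^ 3 := ⟨7 * n ^ 2 - 3 * n * d + 21 * d ^ 2, by linarith [key]⟩
    exact (hcop.pow_right (n := 3)).dvd_of_dvd_mul_right h1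
  have hd7 : d ≤ 7 := Int.le_of_dvd (by norm_num) hddvd
  have hn5 : n ≤ 5 := Int.le_of_dvd (by norm_num) hndvd
  have hn5' : -5 ≤ n := by
    have := Int.le_of_dvd (show (0:ℤ) < 5 by norm_num) ((neg_dvd (α := ℤ)).mpr hndvd)
    omega
  have key2 : 7 * (n * n * n) - 3 * (n * n) * d + 21 * n * (d * d) - 5 * (d * d * d) = 0 := by
    linear_combination key
  interval_cases d <;> interval_cases n <;> omega

lemma g_irr : Irreducible g := by
  rw [irreducible_iff_roots_eq_zero_of_degree_le_three (by rw [g_natDegree]; norm_num)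
    (by rw [g_natDegree])]
  rw [Multiset.eq_zero_iff_forall_notMem]
  intro a ha
  rw [mem_roots g_ne_zero, IsRoot.def] at ha
  have : eval a g = 7 * a ^ 3 - 3 * a ^ 2 + 21 * a - 5 := by
    have := aeval_g (R := ℚ) a
    simpa using this
  exact no_rat_root a (by rw [← this, ha])

lemma card_rootSet_C : Fintype.card (g.rootSet ℂ) = 3 := by
  rw [card_rootSet_eq_natDegree g_irr.separable (IsAlgClosed.splits _), g_natDegree]

lemma f_mono : StrictMono (fun x : ℝ => 7 * x ^ 3 - 3 * x ^ 2 + 21 * x - 5) := by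
  apply strictMono_of_hasDerivAt_pos (f' := fun x => 21 * x ^ 2 - 6 * x + 21)
  · intro x
    have h2 := ((((hasDerivAt_pow 3 x).const_mul (7:ℝ)).sub
      ((hasDerivAt_pow 2 x).const_mul (3:ℝ))).add ((hasDerivAt_id x).const_mul (21:ℝ))).sub_const 5
    refine h2.congr_deriv ?_
    norm_num; ring
  · intro x; nlinarith [sq_nonneg (x - 1/7)]

lemma card_rootSet_R : Fintype.card (g.rootSet ℝ) = 1 := by
  set f : ℝ → ℝ := fun x => 7 * x ^ 3 - 3 * x ^ 2 + 21 * x - 5 with hf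
  have hcont : Continuous f := by fun_prop
  have hiv : (0 : ℝ) ∈ Set.Icc (f 0) (f 1) := by
    constructor <;> norm_num [hf]
  obtain ⟨r, -, hr⟩ := intermediate_value_Icc (by norm_num) hcont.continuousOn hiv
  rw [Fintype.card_eq_one_iff]
  have hmem : ∀ x : ℝ, x ∈ g.rootSet ℝ ↔ f x = 0 := by
    intro x
    rw [Polynomial.mem_rootSet_of_ne g_ne_zero, aeval_g]
  refine ⟨⟨r, (hmem r).mpr hr⟩, ?_⟩
  rintro ⟨y, hy⟩
  ext
  exact f_mono.injective (((hmem y).mp hy).trans hr.symm)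

lemma finrank_splittingField : Module.finrank ℚ g.SplittingField = 6 := by
  have hbij := Polynomial.Gal.galActionHom_bijective_of_prime_degree g_irr
    (by rw [g_natDegree]; norm_num) (by rw [card_rootSet_C, card_rootSet_R])
  have h1 : Fintype.card g.Gal = Fintype.card (Equiv.Perm (g.rootSet ℂ)) :=
    Fintype.card_of_bijective hbij
  rw [← Polynomial.Gal.card_of_separable g_irr.separable, Nat.card_eq_fintype_card, h1, Fintype.card_perm,
    card_rootSet_C]
  rfl

lemma finrank_adjoin_rootSet :
    Module.finrank ℚ (adjoin ℚ (g.rootSet ℂ) : IntermediateField ℚ ℂ) = 6 := by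
  have hsf : IsSplittingField ℚ (adjoin ℚ (g.rootSet ℂ)) g :=
    adjoin_rootSet_isSplittingField (IsAlgClosed.splits _)
  rw [← finrank_splittingField]
  exact (IsSplittingField.algEquiv (adjoin ℚ (g.rootSet ℂ)) g).toLinearEquiv.finrank_eq

lemma finrank_adjoin_root {α : ℂ} (hα : aeval α g = 0) :
    Module.finrank ℚ (ℚ⟮α⟯ : IntermediateField ℚ ℂ) = 3 := by
  have hint : IsIntegral ℚ α := IsAlgebraic.isIntegral ⟨g, g_ne_zero, hα⟩
  rw [adjoin.finrank hint, ← minpoly.eq_of_irreducible g_irr hα,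
    natDegree_mul_leadingCoeff_inv _ g_ne_zero, g_natDegree]

lemma inf_eq_bot (α β : ℂ) (hne : α ≠ β) (hα : aeval α g = 0) (hβ : aeval β g = 0) :
    (ℚ⟮α⟯ ⊓ ℚ⟮β⟯ : IntermediateField ℚ ℂ) = ⊥ := by
  have hintα : IsIntegral ℚ α := IsAlgebraic.isIntegral ⟨g, g_ne_zero, hα⟩
  have hintβ : IsIntegral ℚ β := IsAlgebraic.isIntegral ⟨g, g_ne_zero, hβ⟩
  haveI : FiniteDimensional ℚ (ℚ⟮α⟯ : IntermediateField ℚ ℂ) :=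
    adjoin.finiteDimensional hintα
  haveI : FiniteDimensional ℚ (ℚ⟮β⟯ : IntermediateField ℚ ℂ) :=
    adjoin.finiteDimensional hintβ
  have hfinα := finrank_adjoin_root hα
  have hfinβ := finrank_adjoin_root hβ
  rw [eq_bot_iff]
  intro x hx
  obtain ⟨hxα, hxβ⟩ := hx
  set x' : (ℚ⟮α⟯ : IntermediateField ℚ ℂ) := ⟨x, hxα⟩ with hx'
  have hxint : IsIntegral ℚ x := by
    have h1 : IsIntegral ℚ x' := IsIntegral.of_finite ℚ x'
    exact h1.algebraMap (B := ℂ)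
  have hmx : (minpoly ℚ x).natDegree ∣ 3 := by
    have heq : minpoly ℚ x = minpoly ℚ x' := by
      have := minpoly.algebraMap_eq (A := ℚ) (B' := ℂ)
        (algebraMap (ℚ⟮α⟯ : IntermediateField ℚ ℂ) ℂ).injective x'
      simpa using this
    rw [heq, ← hfinα]
    exact minpoly.degree_dvd (IsIntegral.of_finite ℚ x')
  rcases (Nat.prime_three.eq_one_or_self_of_dvd _ hmx) with h1 | h3
  · rw [minpoly.natDegree_eq_one_iff] at h1
    rwa [IntermediateField.mem_bot]
  · exfalso
    have hfx : Module.finrank ℚ (ℚ⟮x⟯ : IntermediateField ℚ ℂ) = 3 := by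
      rw [adjoin.finrank hxint, h3]
    have hEqα : (ℚ⟮x⟯ : IntermediateField ℚ ℂ) = ℚ⟮α⟯ :=
      eq_of_le_of_finrank_eq (adjoin_simple_le_iff.mpr hxα) (by rw [hfx, hfinα])
    have hEqβ : (ℚ⟮x⟯ : IntermediateField ℚ ℂ) = ℚ⟮β⟯ :=
      eq_of_le_of_finrank_eq (adjoin_simple_le_iff.mpr hxβ) (by rw [hfx, hfinβ])
    have hαβ : (ℚ⟮α⟯ : IntermediateField ℚ ℂ) = ℚ⟮β⟯ := hEqα ▸ hEqβ
    have hβmem : β ∈ (ℚ⟮α⟯ : IntermediateField ℚ ℂ) := by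
      rw [hαβ]; exact mem_adjoin_simple_self ℚ β
    have hαmem : α ∈ (ℚ⟮α⟯ : IntermediateField ℚ ℂ) := mem_adjoin_simple_self ℚ α
    have h37 : ((3 : ℂ) / 7) ∈ (ℚ⟮α⟯ : IntermediateField ℚ ℂ) := by
      have := ℚ⟮α⟯.algebraMap_mem (3 / 7 : ℚ)
      rwa [show (algebraMap ℚ ℂ) (3 / 7 : ℚ) = 3 / 7 by push_cast; norm_num] at this
    have hα' : 7 * α ^ 3 - 3 * α ^ 2 + 21 * α - 5 = 0 := by rwa [aeval_g] at hα
    have hβ' : 7 * β ^ 3 - 3 * β ^ 2 + 21 * β - 5 = 0 := by rwa [aeval_g] at hβ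
    have hroots : g.rootSet ℂ ⊆ (ℚ⟮α⟯ : IntermediateField ℚ ℂ) := by
      intro y hy
      have hy' : 7 * y ^ 3 - 3 * y ^ 2 + 21 * y - 5 = 0 := by
        have := (Polynomial.mem_rootSet_of_ne g_ne_zero).mp hy
        rwa [aeval_g] at this
      have key : (α - β) * ((y - α) * ((y - β) * (y - (3 / 7 - α - β)))) = 0 := by
        linear_combination ((α - β) / 7) * hy' - ((α - β) / 7) * hα' -
          ((y - α) / 7) * hα' + ((y - α) / 7) * hβ'
      have hne' : α - β ≠ 0 := sub_ne_zero.mpr hne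
      rcases mul_eq_zero.mp key with h | h
      · exact absurd h hne'
      rcases mul_eq_zero.mp h with h | h
      · rw [sub_eq_zero.mp h]; exact hαmem
      rcases mul_eq_zero.mp h with h | h
      · rw [sub_eq_zero.mp h]; exact hβmem
      · rw [sub_eq_zero.mp h]
        exact sub_mem (sub_mem h37 hαmem) hβmem
    have hle : adjoin ℚ (g.rootSet ℂ) ≤ (ℚ⟮α⟯ : IntermediateField ℚ ℂ) :=
      adjoin_le_iff.mpr hroots
    have hge : (ℚ⟮α⟯ : IntermediateField ℚ ℂ) ≤ adjoin ℚ (g.rootSet ℂ) := by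
      apply adjoin_simple_le_iff.mpr
      exact subset_adjoin ℚ _ ((Polynomial.mem_rootSet_of_ne g_ne_zero).mpr hα)
    have h6 := finrank_adjoin_rootSet
    rw [le_antisymm hle hge, hfinα] at h6
    norm_num at h6

end CubicFieldAux

/-- For `g = 7x³ − 3x² + 21x − 5`, any two distinct complex roots `α ≠ β`
generate subfields of `ℂ` intersecting in `ℚ`; equivalently the splitting
field of `g` over `ℚ` has degree 6. -/
theorem cubic_roots_generate_distinct_cubic_fields :
    (∀ α β : ℂ, α ≠ β →
      aeval α (7 * X ^ 3 - 3 * X ^ 2 + 21 * X - 5 : Polynomial ℚ) = 0 →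
      aeval β (7 * X ^ 3 - 3 * X ^ 2 + 21 * X - 5 : Polynomial ℚ) = 0 →
      (ℚ⟮α⟯ ⊓ ℚ⟮β⟯ : IntermediateField ℚ ℂ) = ⊥) ∧
    Module.finrank ℚ
      (7 * X ^ 3 - 3 * X ^ 2 + 21 * X - 5 : Polynomial ℚ).SplittingField = 6 := by
  constructor
  · intro α β hne hα hβ
    exact CubicFieldAux.inf_eq_bot α β hne hα hβ
  · exact CubicFieldAux.finrank_splittingField
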